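/- For t > 0 and ψ ∈ [0, min(t, π/2)], define p_y(t,ψ) = -cos ψ + (t-ψ) sin ψ + 1. Then the maximum of p_y(t,ψ) over ψ ∈ [0, min(t, π/2)] equals 1 - cos t if 0 < t ≤ π/2, and equals t - π/2 + 1 if t > π/2. -/

import Mathlib

open Real

/-- the maximum of p_y(t,ψ) = -cos ψ + (t-ψ) sin ψ + 1 over
ψ ∈ [0, min(t, π/2)] is 1 - cos t when 0 < t ≤ π/2, and t - π/2 + 1 when t > π/2. -/
theorem stmt2 (t : ℝ) (ht : 0 < t) :
    IsGreatest ((fun ψ : ℝ => -Real.cos ψ + (t - ψ) * Real.sin ψ + 1) ''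
        Set.Icc 0 (min t (π / 2)))
      (if t ≤ π / 2 then 1 - Real.cos t else t - π / 2 + 1) := by
  have hpi : (0:ℝ) < π / 2 := by positivity
  set m := min t (π / 2) with hm
  have hm0 : 0 ≤ m := le_min ht.le hpi.le
  have hd : ∀ x : ℝ, HasDerivAt (fun ψ : ℝ => -Real.cos ψ + (t - ψ) * Real.sin ψ + 1)
      ((t - x) * Real.cos x) x := by
    intro x
    have h1 := (Real.hasDerivAt_cos x).neg
    have h2 := ((hasDerivAt_id x).const_sub t).mul (Real.hasDerivAt_sin x)
    have h3 := (h1.add h2).add_const 1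
    exact h3.congr_deriv (by simp only [id]; ring)
  have hmono : MonotoneOn (fun ψ : ℝ => -Real.cos ψ + (t - ψ) * Real.sin ψ + 1)
      (Set.Icc 0 m) := by
    apply monotoneOn_of_deriv_nonneg (convex_Icc 0 m)
    · exact Continuous.continuousOn (by continuity)
    · intro x _
      exact (hd x).differentiableAt.differentiableWithinAt
    · intro x hx
      rw [interior_Icc] at hx
      rw [(hd x).deriv]
      have hx1 : x < t := lt_of_lt_of_le hx.2 (min_le_left _ _)
      have hx2 : x < π / 2 := lt_of_lt_of_le hx.2 (min_le_right _ _)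
      have hc : 0 ≤ Real.cos x :=
        Real.cos_nonneg_of_mem_Icc ⟨by linarith [hx.1, Real.pi_pos], hx2.le⟩
      nlinarith
  have hval : (fun ψ : ℝ => -Real.cos ψ + (t - ψ) * Real.sin ψ + 1) m =
      (if t ≤ π / 2 then 1 - Real.cos t else t - π / 2 + 1) := by
    split_ifs with h
    · have : m = t := min_eq_left h
      simp [this]; ring
    · have : m = π / 2 := min_eq_right (not_le.mp h).le
      simp [this, Real.cos_pi_div_two, Real.sin_pi_div_two]
  constructor
  · exact ⟨m, Set.right_mem_Icc.2 hm0, hval⟩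
  · rintro y ⟨x, hx, rfl⟩
    rw [← hval]
    exact hmono hx (Set.right_mem_Icc.2 hm0) hx.2
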